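/- Abel's multinomial identity, second special instance: for every m ≥ 1, every n ≥ 0, and all positive reals x_1,…,x_m, one has A_n(x_1,…,x_m; −1,…,−1,0) = (x_1⋯x_m)^{-1}·x_m·(x_1+⋯+x_m+n)^{n}, i.e. Σ_{(s_1,…,s_m): s_1+⋯+s_m=n} (n!/(s_1!⋯s_m!))·(∏_{j=1}^{m-1} (x_j+s_j)^{s_j-1})·(x_m+s_m)^{s_m} = (x_1⋯x_{m-1})^{-1}·(x_1+⋯+x_m+n)^{n}. -/

import Mathlib

/-- The Abel sum `A_n(x_1,…,x_m; p_1,…,p_m)`: the sum over tuples `s` of nonnegative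
integers with `s_1 + ⋯ + s_m = n` of the multinomial coefficient `n!/(s_1!⋯s_m!)`
times `∏_j (x_j + s_j)^(s_j + p_j)`, powers taken in `ℝ` (`zpow`). -/
noncomputable def abelA (m n : ℕ) (x : Fin m → ℝ) (p : Fin m → ℤ) : ℝ :=
  ∑ s ∈ Finset.Nat.antidiagonalTuple m n,
    (Nat.multinomial Finset.univ s : ℝ) * ∏ j, (x j + s j) ^ ((s j : ℤ) + p j)

open Finset
open scoped Nat

/-- Alternating moment sums vanish: `∑ k (-1)^k C(n,k) k^j = 0` for `j < n`. -/
lemma alt_moment_eq_zero : ∀ (n : ℕ), ∀ j < n,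
    ∑ k ∈ Finset.range (n + 1), (-1 : ℝ) ^ k * (n.choose k : ℝ) * (k : ℝ) ^ j = 0 := by
  intro n
  induction n with
  | zero => intro j hj; omega
  | succ n ih =>
    intro j hj
    match j with
    | 0 =>
      have h : ∑ i ∈ range (n + 2), (-1 : ℤ) ^ i * ((n+1).choose i : ℤ) = 0 := by
        simpa using Int.alternating_sum_range_choose (n := n + 1)
      simp only [pow_zero, mul_one]
      exact_mod_cast h
    | j + 1 =>
      have key : ∀ i ∈ range (n + 1),
          (-1 : ℝ) ^ (i+1) * ((n+1).choose (i+1) : ℝ) * ((i+1 : ℕ) : ℝ) ^ (j+1) =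
          ∑ t ∈ range (j + 1),
            (-((n:ℝ)+1) * (j.choose t : ℝ)) *
              ((-1 : ℝ) ^ i * (n.choose i : ℝ) * (i : ℝ) ^ t) := by
        intro i _
        have hc : (((n+1).choose (i+1) : ℝ)) * ((i : ℝ) + 1) = ((n : ℝ) + 1) * (n.choose i : ℝ) := by
          exact_mod_cast congrArg (fun z : ℕ => (z : ℝ)) (Nat.add_one_mul_choose_eq n i).symm
        have hbin : ((i : ℝ) + 1) ^ j = ∑ t ∈ range (j + 1), (i:ℝ)^t * 1^(j-t) * (j.choose t : ℝ) :=
          add_pow (i : ℝ) 1 j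
        have h1 : (-1 : ℝ) ^ (i+1) * ((n+1).choose (i+1) : ℝ) * ((i+1 : ℕ) : ℝ) ^ (j+1)
            = (-((n:ℝ)+1)) * ((-1 : ℝ) ^ i * (n.choose i : ℝ)) * ((i:ℝ)+1)^j := by
          push_cast
          rw [pow_succ ((i:ℝ)+1) j, pow_succ (-1 : ℝ) i]
          linear_combination ((-1:ℝ)^i * (-1) * ((i:ℝ)+1)^j) * hc
        rw [h1, hbin, Finset.mul_sum]
        refine Finset.sum_congr rfl fun t _ => by ring
      rw [Finset.sum_range_succ']
      simp only [Nat.cast_zero, zero_pow (Nat.succ_ne_zero j), mul_zero, add_zero]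
      rw [Finset.sum_congr rfl key, Finset.sum_comm]
      refine Finset.sum_eq_zero fun t ht => ?_
      have htn : t < n := by
        have := Finset.mem_range.mp ht; omega
      rw [← Finset.mul_sum, ih t htn, mul_zero]

/-- `∑ k (-1)^(n+1-k) C(n+1,k) (x+k)^n = 0`. -/
lemma alt_shift_eq_zero (n : ℕ) (x : ℝ) :
    ∑ k ∈ Finset.range (n + 2), (-1 : ℝ) ^ (n + 1 - k) * ((n+1).choose k : ℝ) * (x + k) ^ n = 0 := by
  have key : ∀ k ∈ range (n + 2),
      (-1 : ℝ) ^ (n + 1 - k) * ((n+1).choose k : ℝ) * (x + k) ^ n =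
      ∑ t ∈ range (n + 1),
        ((-1:ℝ)^(n+1) * (x:ℝ)^t * (n.choose t : ℝ)) *
          ((-1 : ℝ) ^ k * ((n+1).choose k : ℝ) * (k : ℝ) ^ (n - t)) := by
    intro k hk
    have hk' : k ≤ n + 1 := by have := Finset.mem_range.mp hk; omega
    have hsign : (-1 : ℝ) ^ (n + 1 - k) * (-1 : ℝ) ^ k = (-1:ℝ) ^ (n+1) := by
      rw [← pow_add]; congr 1; omega
    have hsign' : (-1 : ℝ) ^ (n + 1 - k) = (-1:ℝ)^(n+1) * (-1:ℝ)^k := by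
      have h2 : ((-1:ℝ)^k) * ((-1:ℝ)^k) = 1 := by
        rw [← pow_add, ← two_mul, pow_mul]; norm_num
      calc (-1 : ℝ) ^ (n + 1 - k) = (-1 : ℝ) ^ (n + 1 - k) * (((-1:ℝ)^k) * ((-1:ℝ)^k)) := by
            rw [h2, mul_one]
        _ = (-1:ℝ)^(n+1) * (-1:ℝ)^k := by rw [← mul_assoc, hsign]
    have hbin : (x + (k:ℝ)) ^ n = ∑ t ∈ range (n + 1), x^t * (k:ℝ)^(n-t) * (n.choose t : ℝ) :=
      add_pow x (k : ℝ) n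
    rw [hsign', hbin, Finset.mul_sum]
    refine Finset.sum_congr rfl fun t _ => by ring
  rw [Finset.sum_congr rfl key, Finset.sum_comm]
  refine Finset.sum_eq_zero fun t ht => ?_
  have htn : n - t < n + 1 := by omega
  rw [← Finset.mul_sum, alt_moment_eq_zero (n+1) (n-t) htn, mul_zero]

/-- Abel's binomial theorem:
`∑ k C(n,k) x (x+k)^(k-1) (y+n-k)^(n-k) = (x+y+n)^n` for `x > 0`. -/
lemma abel_binomial (x : ℝ) (hx : 0 < x) : ∀ (n : ℕ) (y : ℝ),
    ∑ k ∈ Finset.range (n + 1),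
        (n.choose k : ℝ) * (x * (x + k) ^ ((k : ℤ) - 1)) * (y + ((n - k : ℕ) : ℝ)) ^ (n - k)
      = (x + y + n) ^ n := by
  intro n
  induction n with
  | zero =>
    intro y
    simp [zpow_neg, mul_inv_cancel₀ hx.ne']
  | succ n ih =>
    intro y
    set c : ℕ → ℝ := fun k => ((n+1).choose k : ℝ) * (x * (x + k) ^ ((k : ℤ) - 1)) with hc
    set L : ℝ → ℝ := fun z =>
      ∑ k ∈ Finset.range (n + 2), c k * (z + ((n + 1 - k : ℕ) : ℝ)) ^ (n + 1 - k) with hLdef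
    set f : ℝ → ℝ := fun z => L z - (x + z + ((n:ℝ)+1)) ^ (n+1) with hfdef
    have hL : ∀ z : ℝ, HasDerivAt L
        (∑ k ∈ Finset.range (n + 2),
          c k * (((n + 1 - k : ℕ) : ℝ) * (z + ((n + 1 - k : ℕ) : ℝ)) ^ (n + 1 - k - 1))) z := by
      intro z
      refine HasDerivAt.fun_sum fun k _ => ?_
      have h1 : HasDerivAt (fun z : ℝ => z + ((n + 1 - k : ℕ) : ℝ)) 1 z :=
        (hasDerivAt_id z).add_const _
      have h2 := h1.pow (n + 1 - k)
      rw [mul_one] at h2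
      exact h2.const_mul (c k)
    have hDval : ∀ z : ℝ,
        (∑ k ∈ Finset.range (n + 2),
          c k * (((n + 1 - k : ℕ) : ℝ) * (z + ((n + 1 - k : ℕ) : ℝ)) ^ (n + 1 - k - 1)))
        = ((n:ℝ)+1) * (x + (z+1) + n) ^ n := by
      intro z
      rw [Finset.sum_range_succ]
      simp only [Nat.sub_self, Nat.cast_zero, zero_mul, mul_zero, add_zero]
      rw [← ih (z + 1)]
      rw [Finset.mul_sum]
      refine Finset.sum_congr rfl fun k hk => ?_
      have hkn : k ≤ n := by have := Finset.mem_range.mp hk; omega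
      have e1 : n + 1 - k = (n - k) + 1 := by omega
      have e2 : n + 1 - k - 1 = n - k := by omega
      have echoose : ((n+1).choose k : ℝ) * ((n + 1 - k : ℕ) : ℝ) = ((n:ℝ)+1) * (n.choose k : ℝ) := by
        have hnat : (n+1).choose k * (n + 1 - k) = (n+1) * n.choose k := by
          rw [← Nat.choose_symm (show k ≤ n + 1 by omega),
            show n + 1 - k = (n - k) + 1 from by omega, ← Nat.add_one_mul_choose_eq,
            Nat.choose_symm hkn]
        exact_mod_cast congrArg (fun z : ℕ => (z : ℝ)) hnat
      have ecast : ((n + 1 - k : ℕ) : ℝ) = ((n - k : ℕ) : ℝ) + 1 := by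
        rw [e1]; push_cast; ring
      have ez : z + ((n + 1 - k : ℕ) : ℝ) = (z + 1) + ((n - k : ℕ) : ℝ) := by
        rw [ecast]; ring
      rw [e2, ez, hc]
      calc ((n+1).choose k : ℝ) * (x * (x + k) ^ ((k : ℤ) - 1)) *
            (((n + 1 - k : ℕ) : ℝ) * ((z + 1) + ((n - k : ℕ) : ℝ)) ^ (n - k))
          = (((n+1).choose k : ℝ) * ((n + 1 - k : ℕ) : ℝ)) *
              ((x * (x + k) ^ ((k : ℤ) - 1)) * ((z + 1) + ((n - k : ℕ) : ℝ)) ^ (n - k)) := by ring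
        _ = (((n:ℝ)+1) * (n.choose k : ℝ)) *
              ((x * (x + k) ^ ((k : ℤ) - 1)) * ((z + 1) + ((n - k : ℕ) : ℝ)) ^ (n - k)) := by
            rw [echoose]
        _ = ((n:ℝ)+1) * ((n.choose k : ℝ) * (x * (x + k) ^ ((k : ℤ) - 1)) *
              ((z + 1) + ((n - k : ℕ) : ℝ)) ^ (n - k)) := by ring
    have hf : ∀ z : ℝ, HasDerivAt f 0 z := by
      intro z
      have hR : HasDerivAt (fun z : ℝ => (x + z + ((n:ℝ)+1)) ^ (n+1))
          ((((n:ℕ)+1 : ℕ) : ℝ) * (x + z + ((n:ℝ)+1)) ^ n * 1) z := by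
        have h1 : HasDerivAt (fun z : ℝ => x + z + ((n:ℝ)+1)) 1 z := by
          simpa using (((hasDerivAt_id z).const_add x).add_const ((n:ℝ)+1))
        simpa using h1.fun_pow (n+1)
      have := (hL z).fun_sub hR
      convert this using 1
      · rfl
      · rfl
      rw [hDval z]
      push_cast
      ring_nf
    have hconst : ∀ z w : ℝ, f z = f w :=
      is_const_of_deriv_eq_zero (fun z => (hf z).differentiableAt)
        (fun z => (hf z).deriv) 
    have heval : f (-(x + ((n:ℝ)+1))) = 0 := by
      have hL0 : L (-(x + ((n:ℝ)+1))) =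
          x * ∑ k ∈ Finset.range (n + 2),
            (-1 : ℝ) ^ (n + 1 - k) * ((n+1).choose k : ℝ) * (x + k) ^ n := by
        rw [hLdef, Finset.mul_sum]
        refine Finset.sum_congr rfl fun k hk => ?_
        have hk' : k ≤ n + 1 := by have := Finset.mem_range.mp hk; omega
        have hxk : (0:ℝ) < x + k := by positivity
        have ecast : ((n + 1 - k : ℕ) : ℝ) = ((n:ℝ) + 1) - k := by
          rw [Nat.cast_sub hk']; push_cast; ring
        have ebase : -(x + ((n:ℝ)+1)) + ((n + 1 - k : ℕ) : ℝ) = -(x + k) := by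
          rw [ecast]; ring
        have epow : (-(x + (k:ℝ))) ^ (n + 1 - k) = (-1:ℝ)^(n+1-k) * (x + k) ^ (n+1-k) := by
          rw [neg_pow]
        have ezpow : (x + (k:ℝ)) ^ ((k : ℤ) - 1) * (x + k) ^ (n + 1 - k) = (x + k) ^ n := by
          have h1 : (x + (k:ℝ)) ^ (n + 1 - k) = (x + (k:ℝ)) ^ (((n + 1 - k : ℕ) : ℤ)) := by
            rw [zpow_natCast]
          rw [h1, ← zpow_add₀ hxk.ne']
          have h2 : (k : ℤ) - 1 + ((n + 1 - k : ℕ) : ℤ) = (n : ℤ) := by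
            rw [Nat.cast_sub hk']; push_cast; ring
          rw [h2, zpow_natCast]
        rw [ebase, epow, hc]
        calc ((n+1).choose k : ℝ) * (x * (x + k) ^ ((k : ℤ) - 1)) *
              ((-1:ℝ)^(n+1-k) * (x + k) ^ (n+1-k))
            = x * ((-1 : ℝ) ^ (n + 1 - k) * ((n+1).choose k : ℝ) *
                ((x + (k:ℝ)) ^ ((k : ℤ) - 1) * (x + k) ^ (n + 1 - k))) := by ring
          _ = x * ((-1 : ℝ) ^ (n + 1 - k) * ((n+1).choose k : ℝ) * (x + k) ^ n) := by rw [ezpow]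
      have hR0 : (x + (-(x + ((n:ℝ)+1))) + ((n:ℝ)+1)) ^ (n+1) = 0 := by
        have : x + (-(x + ((n:ℝ)+1))) + ((n:ℝ)+1) = 0 := by ring
        rw [this, zero_pow (Nat.succ_ne_zero n)]
      rw [hfdef]
      simp only
      rw [hL0, hR0, alt_shift_eq_zero n x, mul_zero, sub_zero]
    have hfy : f y = 0 := by rw [hconst y (-(x + ((n:ℝ)+1)))]; exact heval
    have : L y = (x + y + ((n:ℝ)+1)) ^ (n+1) := by
      have := sub_eq_zero.mp hfy
      simpa using this
    rw [hLdef] at this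
    simp only at this
    calc ∑ k ∈ Finset.range (n + 1 + 1),
          ((n+1).choose k : ℝ) * (x * (x + k) ^ ((k : ℤ) - 1)) *
            (y + ((n + 1 - k : ℕ) : ℝ)) ^ (n + 1 - k)
        = L y := by rw [hLdef]
      _ = (x + y + ((n:ℝ)+1)) ^ (n+1) := this
      _ = (x + y + ((n:ℕ)+1 : ℕ)) ^ (n+1) := by push_cast; ring_nf

/-- Multinomial coefficient of a `Fin.cons`. -/
lemma multinomial_univ_cons {m : ℕ} (k : ℕ) (t : Fin m → ℕ) :
    Nat.multinomial Finset.univ (Fin.cons k t) =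
      (k + ∑ i, t i).choose k * Nat.multinomial Finset.univ t := by
  have h1 := Nat.multinomial_spec (Finset.univ : Finset (Fin (m+1))) (Fin.cons k t)
  have h2 := Nat.multinomial_spec (Finset.univ : Finset (Fin m)) t
  rw [Fin.prod_univ_succ, Fin.sum_univ_succ] at h1
  simp only [Fin.cons_zero, Fin.cons_succ] at h1
  have hpos : 0 < k ! * ∏ i, (t i)! := by positivity
  apply Nat.eq_of_mul_eq_mul_left hpos
  calc (k ! * ∏ i, (t i)!) * Nat.multinomial Finset.univ (Fin.cons k t)
      = (k + ∑ i, t i)! := h1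
    _ = (k + ∑ i, t i).choose k * k ! * ((k + ∑ i, t i) - k)! := by
        rw [Nat.choose_mul_factorial_mul_factorial (Nat.le_add_right k _)]
    _ = (k + ∑ i, t i).choose k * k ! * (∑ i, t i)! := by rw [Nat.add_sub_cancel_left]
    _ = (k + ∑ i, t i).choose k * k ! * ((∏ i, (t i)!) * Nat.multinomial Finset.univ t) := by
        rw [h2]
    _ = (k ! * ∏ i, (t i)!) * ((k + ∑ i, t i).choose k * Nat.multinomial Finset.univ t) := by
        ring

/-- Splitting the sum over `antidiagonalTuple (m+1) n` along the first coordinate. -/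
lemma sum_antidiagonalTuple_succ {M : Type*} [AddCommMonoid M] (m n : ℕ)
    (f : (Fin (m+1) → ℕ) → M) :
    ∑ s ∈ Finset.Nat.antidiagonalTuple (m+1) n, f s =
      ∑ k ∈ Finset.range (n + 1), ∑ t ∈ Finset.Nat.antidiagonalTuple m (n - k),
        f (Fin.cons k t) := by
  have step1 : ∑ s ∈ Finset.Nat.antidiagonalTuple (m+1) n, f s =
      ∑ q ∈ (Finset.HasAntidiagonal.antidiagonal n).sigma
          (fun kl => Finset.Nat.antidiagonalTuple m kl.2), f (Fin.cons q.1.1 q.2) := by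
    refine Finset.sum_nbij'
      (i := fun s => ⟨(s 0, ∑ i, Fin.tail s i), Fin.tail s⟩)
      (j := fun q => Fin.cons q.1.1 q.2) ?_ ?_ ?_ ?_ ?_
    · intro s hs
      rw [Finset.Nat.mem_antidiagonalTuple, Fin.sum_univ_succ] at hs
      rw [Finset.mem_sigma]
      constructor
      · rw [Finset.HasAntidiagonal.mem_antidiagonal]
        simpa [Fin.tail] using hs
      · rw [Finset.Nat.mem_antidiagonalTuple]
    · intro q hq
      rw [Finset.mem_sigma, Finset.HasAntidiagonal.mem_antidiagonal, Finset.Nat.mem_antidiagonalTuple] at hq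
      rw [Finset.Nat.mem_antidiagonalTuple, Fin.sum_cons, hq.2, hq.1]
    · intro s _
      exact Fin.cons_self_tail s
    · intro q hq
      rw [Finset.mem_sigma, Finset.HasAntidiagonal.mem_antidiagonal, Finset.Nat.mem_antidiagonalTuple] at hq
      refine Sigma.ext ?_ (heq_of_eq ?_)
      · simp [Fin.tail_cons, hq.2]
      · simp [Fin.tail_cons]
    · intro s _
      rw [Fin.cons_self_tail]
  rw [step1, Finset.sum_sigma, Finset.Nat.sum_antidiagonal_eq_sum_range_succ_mk]

/-- Recursion for the Abel sum, peeling the first variable. -/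
lemma abelA_succ_eq (m n : ℕ) (x : Fin (m+1) → ℝ) (p : Fin (m+1) → ℤ) :
    abelA (m+1) n x p =
      ∑ k ∈ Finset.range (n + 1), (n.choose k : ℝ) * (x 0 + k) ^ ((k : ℤ) + p 0) *
        abelA m (n - k) (x ∘ Fin.succ) (p ∘ Fin.succ) := by
  rw [abelA, sum_antidiagonalTuple_succ]
  refine Finset.sum_congr rfl fun k hk => ?_
  have hkn : k ≤ n := by have := Finset.mem_range.mp hk; omega
  rw [abelA, Finset.mul_sum]
  refine Finset.sum_congr rfl fun t ht => ?_
  rw [Finset.Nat.mem_antidiagonalTuple] at ht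
  have hsum : k + ∑ i, t i = n := by omega
  rw [multinomial_univ_cons, hsum, Fin.prod_univ_succ]
  simp only [Fin.cons_zero, Fin.cons_succ, Function.comp_apply]
  push_cast
  ring

/-- Abel's multinomial identity, second special instance (stated with `m + 1 ≥ 1`
variables, the last one carrying exponent offset `0` and all the others `−1`):
`A_n(x_1,…,x_m; −1,…,−1,0) = (x_1⋯x_m)⁻¹·x_m·(x_1+⋯+x_m+n)^n`. -/
theorem abel_multinomial_special_two (m n : ℕ)
    (x : Fin (m + 1) → ℝ) (hx : ∀ j, 0 < x j) :
    abelA (m + 1) n x (fun j => if j = Fin.last m then 0 else -1) =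
      (∏ j, x j)⁻¹ * x (Fin.last m) * ((∑ j, x j) + n) ^ n := by
  induction m generalizing n with
  | zero =>
    rw [abelA]
    rw [Finset.Nat.antidiagonalTuple_one, Finset.sum_singleton]
    have hm : Nat.multinomial (Finset.univ : Finset (Fin 1)) ![n] = 1 := by
      have : (![n] : Fin 1 → ℕ) = Fin.cons n ![] := rfl
      rw [this, multinomial_univ_cons]
      simp [Nat.multinomial]
    rw [hm]
    rw [show Fin.last 0 = 0 from rfl]
    simp only [Fin.prod_univ_succ, Fin.prod_univ_zero, Fin.sum_univ_succ, Fin.sum_univ_zero,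
      mul_one, add_zero, Matrix.cons_val_zero, eq_self_iff_true, if_true, Nat.cast_one, one_mul, zpow_natCast]
    rw [inv_mul_cancel₀ (hx 0).ne', one_mul]
  | succ m ih =>
    rw [abelA_succ_eq]
    have hp0 : (if (0 : Fin (m+2)) = Fin.last (m+1) then (0:ℤ) else -1) = -1 := by
      rw [if_neg]
      intro h
      have := congrArg Fin.val h
      simp [Fin.last] at this
    have hpsucc : ((fun j => if j = Fin.last (m+1) then (0:ℤ) else -1) ∘ Fin.succ) =
        (fun j : Fin (m+1) => if j = Fin.last m then (0:ℤ) else -1) := by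
      funext j
      simp only [Function.comp_apply]
      congr 1
      simp only [eq_iff_iff]
      constructor
      · intro h
        have : Fin.succ j = Fin.succ (Fin.last m) := by rw [h, Fin.succ_last]
        exact Fin.succ_injective _ this
      · intro h; rw [h, Fin.succ_last]
    simp only [hp0, hpsucc]
    have hx' : ∀ j : Fin (m+1), 0 < (x ∘ Fin.succ) j := fun j => hx _
    set Y : ℝ := ∑ j, x (Fin.succ j) with hY
    set C : ℝ := (∏ j, x (Fin.succ j))⁻¹ * x (Fin.succ (Fin.last m)) with hC
    have hIH : ∀ k ∈ Finset.range (n+1),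
        (n.choose k : ℝ) * (x 0 + k) ^ ((k : ℤ) + (-1)) *
          abelA (m+1) (n-k) (x ∘ Fin.succ) (fun j => if j = Fin.last m then (0:ℤ) else -1)
        = ((x 0)⁻¹ * C) *
            ((n.choose k : ℝ) * (x 0 * (x 0 + k) ^ ((k : ℤ) - 1)) *
              (Y + ((n - k : ℕ) : ℝ)) ^ (n - k)) := by
      intro k hk
      rw [ih (n-k) (x ∘ Fin.succ) hx']
      have h0 : (0:ℝ) < x 0 := hx 0
      have : (x 0)⁻¹ * x 0 = 1 := inv_mul_cancel₀ h0.ne'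
      simp only [Function.comp_apply]
      rw [← hY, ← hC]
      have hee : (k : ℤ) + (-1) = (k : ℤ) - 1 := by ring
      rw [hee]
      field_simp
    rw [Finset.sum_congr rfl hIH, ← Finset.mul_sum, abel_binomial (x 0) (hx 0) n Y]
    have hprod : (∏ j : Fin (m+2), x j) = x 0 * ∏ j : Fin (m+1), x (Fin.succ j) :=
      Fin.prod_univ_succ x
    have hsum : (∑ j : Fin (m+2), x j) = x 0 + ∑ j : Fin (m+1), x (Fin.succ j) :=
      Fin.sum_univ_succ x
    have hlast : x (Fin.last (m+1)) = x (Fin.succ (Fin.last m)) := by rw [Fin.succ_last]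
    rw [hprod, hsum, hlast, hC, ← hY]
    rw [mul_inv]
    ring
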